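/- Tensorization of maximum discounted score: for every score function φ, every (possibly partial) function f : X → {0,1} with X ⊆ {0,1}^m, every probability distribution μ on X, every discount factor α ≥ 0, and every integer n ≥ 1, the maximum discounted score of the n-fold direct product under the product distribution equals the n-th power of the maximum discounted score of f: DS_α^{μ^n}(f^n) = (DS_α^μ(f))^n. -/

import Mathlib

open Finset

/-- Deterministic decision trees querying coordinates `i : ι` of inputs `x : ι → Bool`,
with leaves labelled by elements of `L`. -/
inductive DTree (ι : Type) (L : Type) : Type
  | leaf (lab : L) : DTree ι L
  | node (i : ι) (t0 : DTree ι L) (t1 : DTree ι L) : DTree ι L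

namespace DTree

variable {ι L : Type}

/-- Output label at the leaf reached by input `x`. -/
def out : DTree ι L → (ι → Bool) → L
  | .leaf lab, _ => lab
  | .node i t0 t1, x => if x i then out t1 x else out t0 x

/-- Number of queries made on input `x` (depth of the leaf reached by `x`). -/
def cost : DTree ι L → (ι → Bool) → ℕ
  | .leaf _, _ => 0
  | .node i t0 t1, x => (if x i then cost t1 x else cost t0 x) + 1

/-- Maximum leaf depth of the tree. -/
def depth : DTree ι L → ℕ
  | .leaf _ => 0
  | .node _ t0 t1 => max (depth t0) (depth t1) + 1

/-- The set of inputs reaching the same leaf as input `x`. -/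
def leafSet : DTree ι L → (ι → Bool) → Set (ι → Bool)
  | .leaf _, _ => Set.univ
  | .node i t0 t1, x => {y | y i = x i} ∩ (if x i then leafSet t1 x else leafSet t0 x)

/-- Every leaf label of the tree satisfies the predicate `P`. -/
def allLabels : DTree ι L → (L → Prop) → Prop
  | .leaf lab, P => P lab
  | .node _ t0 t1, P => allLabels t0 P ∧ allLabels t1 P

end DTree

/-- A randomized query algorithm: a finitely supported probability distribution over
deterministic decision trees. -/
structure RandAlg (ι : Type) (L : Type) where
  k : ℕ
  p : Fin k → ℝ
  T : Fin k → DTree ι L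
  p_nonneg : ∀ j, 0 ≤ p j
  p_sum : ∑ j, p j = 1

/-- A probability distribution on inputs, supported inside the domain `X`. -/
structure InputDist (ι : Type) [Fintype ι] [DecidableEq ι] (X : Set (ι → Bool)) where
  μ : (ι → Bool) → ℝ
  nonneg : ∀ x, 0 ≤ μ x
  sum_one : ∑ x, μ x = 1
  supp : ∀ x, x ∉ X → μ x = 0

/-- A score function `φ : [0,1] → [1/2,1]`. -/
structure ScoreFun where
  φ : ℝ → ℝ
  continuous : ContinuousOn φ (Set.Icc 0 1)
  half_le : ∀ p ∈ Set.Icc (0:ℝ) 1, 1 / 2 ≤ φ p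
  le_one : ∀ p ∈ Set.Icc (0:ℝ) 1, φ p ≤ 1
  map_zero : φ 0 = 1
  map_one : φ 1 = 1
  map_half : φ (1 / 2) = 1 / 2
  symm : ∀ p ∈ Set.Icc (0:ℝ) 1, φ (1 - p) = φ p
  mono : MonotoneOn φ (Set.Icc (1 / 2) 1)

section Defs

variable {ι L : Type} [Fintype ι] [DecidableEq ι]

/-- Mass of a set of inputs under the weight function `μ`. -/
noncomputable def mass (μ : (ι → Bool) → ℝ) (S : Set (ι → Bool)) : ℝ :=
  ∑ x, Set.indicator S μ x

/-- Score `φ(μ(ℓ₁)/μ(ℓ))` of the leaf `ℓ` reached by `x` in the tree `t`. -/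
noncomputable def leafScore (S : ScoreFun) (f : (ι → Bool) → Bool) (μ : (ι → Bool) → ℝ)
    (t : DTree ι L) (x : ι → Bool) : ℝ :=
  S.φ (mass μ (t.leafSet x ∩ {y | f y = true}) / mass μ (t.leafSet x))

/-- Score of a randomized algorithm: `E_{D∼R, x∼μ}[score(D(x))]`. -/
noncomputable def algScore (S : ScoreFun) (f : (ι → Bool) → Bool) (μ : (ι → Bool) → ℝ)
    (R : RandAlg ι L) : ℝ :=
  ∑ j, R.p j * ∑ x, μ x * leafScore S f μ (R.T j) x

/-- Expected cost `E_{D∼R, x∼μ}[cost(D(x))]`. -/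
noncomputable def expCost (μ : (ι → Bool) → ℝ) (R : RandAlg ι L) : ℝ :=
  ∑ j, R.p j * ∑ x, μ x * ((R.T j).cost x : ℝ)

/-- Score-weighted cost `E[score(D(x))·cost(D(x))] / E[score(D(x))]`. -/
noncomputable def scost (S : ScoreFun) (f : (ι → Bool) → Bool) (μ : (ι → Bool) → ℝ)
    (R : RandAlg ι L) : ℝ :=
  (∑ j, R.p j * ∑ x, μ x * (leafScore S f μ (R.T j) x * ((R.T j).cost x : ℝ))) /
    algScore S f μ R

/-- Discounted score `E[score(D(x))·e^{-α·cost(D(x))}]`. -/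
noncomputable def dScore (S : ScoreFun) (f : (ι → Bool) → Bool) (μ : (ι → Bool) → ℝ)
    (α : ℝ) (R : RandAlg ι L) : ℝ :=
  ∑ j, R.p j * ∑ x, μ x *
    (leafScore S f μ (R.T j) x * Real.exp (-(α * ((R.T j).cost x : ℝ))))

/-- Maximum discounted score `DS_α^μ(f)`. -/
noncomputable def DS (S : ScoreFun) (f : (ι → Bool) → Bool) (μ : (ι → Bool) → ℝ)
    (α : ℝ) : ℝ :=
  ⨆ R : RandAlg ι Unit, dScore S f μ α R

/-- Distributional score-weighted query complexity `sR̄̄_γ^μ(f)`. -/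
noncomputable def sRdist (S : ScoreFun) (f : (ι → Bool) → Bool) (μ : (ι → Bool) → ℝ)
    (γ : ℝ) : ℝ :=
  sInf {c | ∃ R : RandAlg ι Unit, γ ≤ algScore S f μ R ∧ scost S f μ R = c}

/-- Distributional query complexity `R̄̄_γ^μ(f)` (expected cost). -/
noncomputable def Rdist (S : ScoreFun) (f : (ι → Bool) → Bool) (μ : (ι → Bool) → ℝ)
    (γ : ℝ) : ℝ :=
  sInf {c | ∃ R : RandAlg ι Unit, γ ≤ algScore S f μ R ∧ expCost μ R = c}

/-- Maximum score-weighted distributional query complexity `sR̄̄_γ(f)`. -/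
noncomputable def sRmax (S : ScoreFun) (X : Set (ι → Bool)) (f : (ι → Bool) → Bool)
    (γ : ℝ) : ℝ :=
  ⨆ μ : InputDist ι X, sRdist S f μ.μ γ

/-- Maximum distributional query complexity `R̄̄_γ(f)`. -/
noncomputable def Rmax (S : ScoreFun) (X : Set (ι → Bool)) (f : (ι → Bool) → Bool)
    (γ : ℝ) : ℝ :=
  ⨆ μ : InputDist ι X, Rdist S f μ.μ γ

/-- Success-probability score `max{μ(ℓ₀),μ(ℓ₁)}/μ(ℓ)` of the leaf reached by `x`. -/
noncomputable def succLeafScore (f : (ι → Bool) → Bool) (μ : (ι → Bool) → ℝ)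
    (t : DTree ι L) (x : ι → Bool) : ℝ :=
  max (mass μ (t.leafSet x ∩ {y | f y = false})) (mass μ (t.leafSet x ∩ {y | f y = true})) /
    mass μ (t.leafSet x)

/-- Success-probability score of a randomized algorithm. -/
noncomputable def succAlgScore (f : (ι → Bool) → Bool) (μ : (ι → Bool) → ℝ)
    (R : RandAlg ι L) : ℝ :=
  ∑ j, R.p j * ∑ x, μ x * succLeafScore f μ (R.T j) x

/-- Distributional query complexity with the success-probability score. -/
noncomputable def succRdist (f : (ι → Bool) → Bool) (μ : (ι → Bool) → ℝ) (γ : ℝ) : ℝ :=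
  sInf {c | ∃ R : RandAlg ι Unit, γ ≤ succAlgScore f μ R ∧ expCost μ R = c}

/-- Maximum distributional query complexity `R̄̄_γ(f)` with the success-probability score. -/
noncomputable def succRmax (X : Set (ι → Bool)) (f : (ι → Bool) → Bool) (γ : ℝ) : ℝ :=
  ⨆ μ : InputDist ι X, succRdist f μ.μ γ

/-- The fraction `q = μ(ℓ₁)/μ(ℓ)` at the leaf reached by `x`. -/
noncomputable def leafBias (f : (ι → Bool) → Bool) (μ : (ι → Bool) → ℝ)
    (t : DTree ι L) (x : ι → Bool) : ℝ :=
  mass μ (t.leafSet x ∩ {y | f y = true}) / mass μ (t.leafSet x)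

/-- Hellinger loss `E[2·√(q(1-q))]` of a randomized algorithm. -/
noncomputable def helLossAlg (f : (ι → Bool) → Bool) (μ : (ι → Bool) → ℝ)
    (R : RandAlg ι L) : ℝ :=
  ∑ j, R.p j * ∑ x, μ x *
    (2 * Real.sqrt (leafBias f μ (R.T j) x * (1 - leafBias f μ (R.T j) x)))

/-- Hellinger score `E[1 - √(q(1-q))]` of a randomized algorithm. -/
noncomputable def helScoreAlg (f : (ι → Bool) → Bool) (μ : (ι → Bool) → ℝ)
    (R : RandAlg ι L) : ℝ :=
  ∑ j, R.p j * ∑ x, μ x *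
    (1 - Real.sqrt (leafBias f μ (R.T j) x * (1 - leafBias f μ (R.T j) x)))

/-- `R̄̄_{Hel↓,ε}(f)`: maximum distributional complexity at Hellinger loss `ε`. -/
noncomputable def RmaxHelLoss (X : Set (ι → Bool)) (f : (ι → Bool) → Bool) (ε : ℝ) : ℝ :=
  ⨆ μ : InputDist ι X,
    sInf {c | ∃ R : RandAlg ι Unit, helLossAlg f μ.μ R ≤ ε ∧ expCost μ.μ R = c}

/-- `R̄̄_{Hel,γ}(f)`: maximum distributional complexity at Hellinger score `γ`. -/
noncomputable def RmaxHel (X : Set (ι → Bool)) (f : (ι → Bool) → Bool) (γ : ℝ) : ℝ :=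
  ⨆ μ : InputDist ι X,
    sInf {c | ∃ R : RandAlg ι Unit, γ ≤ helScoreAlg f μ.μ R ∧ expCost μ.μ R = c}

/-- Binary entropy function. -/
noncomputable def binEnt (p : ℝ) : ℝ :=
  -(p * Real.logb 2 p) - (1 - p) * Real.logb 2 (1 - p)

/-- Exponential-entropy score `E[1 - (1/2)·2^{-h(q)}]` of a randomized algorithm. -/
noncomputable def entScoreAlg (f : (ι → Bool) → Bool) (μ : (ι → Bool) → ℝ)
    (R : RandAlg ι L) : ℝ :=
  ∑ j, R.p j * ∑ x, μ x *
    (1 - (1 / 2) * (2:ℝ) ^ (-(binEnt (leafBias f μ (R.T j) x))))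

/-- `R̄̄_{Ent,γ}(f)`: maximum distributional complexity at exponential-entropy score `γ`. -/
noncomputable def RmaxEnt (X : Set (ι → Bool)) (f : (ι → Bool) → Bool) (γ : ℝ) : ℝ :=
  ⨆ μ : InputDist ι X,
    sInf {c | ∃ R : RandAlg ι Unit, γ ≤ entScoreAlg f μ.μ R ∧ expCost μ.μ R = c}

end Defs

section WorstCase

variable {ι L : Type}

open Classical in
/-- Worst-case randomized query complexity for a generic task: minimum, over randomized
algorithms whose leaf labels satisfy `labelOK` and which on every input `x ∈ X` output a
label `z` with `good x z` with probability at least `δ`, of the maximum leaf depth over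
the trees in the support. -/
noncomputable def RwcTask (X : Set (ι → Bool)) (good : (ι → Bool) → L → Prop)
    (labelOK : L → Prop) (δ : ℝ) : ℕ :=
  sInf {d : ℕ | ∃ R : RandAlg ι L,
    (∀ j, R.p j ≠ 0 → (R.T j).allLabels labelOK) ∧
    (∀ x ∈ X, δ ≤ ∑ j, if good x ((R.T j).out x) then R.p j else 0) ∧
    ∀ j, R.p j ≠ 0 → (R.T j).depth ≤ d}

/-- Worst-case randomized query complexity `R_δ(f)` of a (partial) Boolean function. -/
noncomputable def Rwc (X : Set (ι → Bool)) (f : (ι → Bool) → Bool) (δ : ℝ) : ℕ :=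
  RwcTask X (fun x b => b = f x) (fun _ : Bool => True) δ

end WorstCase

section Product

variable {m n : ℕ} {L : Type}

/-- The `i`-th block of an input to the `n`-fold direct product. -/
def block (x : Fin n × Fin m → Bool) (i : Fin n) : Fin m → Bool := fun j => x (i, j)

/-- The product domain `Xⁿ`. -/
def Xpow (n : ℕ) (X : Set (Fin m → Bool)) : Set (Fin n × Fin m → Bool) :=
  {x | ∀ i, block x i ∈ X}

/-- The `n`-fold direct product `fⁿ`. -/
def fpow (f : (Fin m → Bool) → Bool) (x : Fin n × Fin m → Bool) : Fin n → Bool :=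
  fun i => f (block x i)

/-- The product distribution `μⁿ`. -/
noncomputable def prodMu (μ : (Fin m → Bool) → ℝ) (x : Fin n × Fin m → Bool) : ℝ :=
  ∏ i, μ (block x i)

/-- The `i`-th factor `ℓ^(i)` of the (product) leaf reached by `x` in a decision tree for `fⁿ`. -/
def blockSet (t : DTree (Fin n × Fin m) L) (x : Fin n × Fin m → Bool) (i : Fin n) :
    Set (Fin m → Bool) :=
  {y | (fun q : Fin n × Fin m => if q.1 = i then y q.2 else x q) ∈ t.leafSet x}

/-- Score of a leaf of a tree for `fⁿ` under `μⁿ`: the product of the scores of its factors. -/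
noncomputable def prodLeafScore (S : ScoreFun) (f : (Fin m → Bool) → Bool)
    (μ : (Fin m → Bool) → ℝ) (t : DTree (Fin n × Fin m) L) (x : Fin n × Fin m → Bool) : ℝ :=
  ∏ i, S.φ (mass μ (blockSet t x i ∩ {y | f y = true}) / mass μ (blockSet t x i))

/-- Score of a randomized algorithm for `fⁿ` under `μⁿ`. -/
noncomputable def algScoreN (S : ScoreFun) (f : (Fin m → Bool) → Bool)
    (μ : (Fin m → Bool) → ℝ) (R : RandAlg (Fin n × Fin m) L) : ℝ :=
  ∑ j, R.p j * ∑ x, prodMu μ x * prodLeafScore S f μ (R.T j) x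

/-- Score-weighted cost of a randomized algorithm for `fⁿ` under `μⁿ`. -/
noncomputable def scostN (S : ScoreFun) (f : (Fin m → Bool) → Bool)
    (μ : (Fin m → Bool) → ℝ) (R : RandAlg (Fin n × Fin m) L) : ℝ :=
  (∑ j, R.p j * ∑ x, prodMu μ x * (prodLeafScore S f μ (R.T j) x * ((R.T j).cost x : ℝ))) /
    algScoreN S f μ R

/-- Discounted score of a randomized algorithm for `fⁿ` under `μⁿ`. -/
noncomputable def dScoreN (S : ScoreFun) (f : (Fin m → Bool) → Bool)
    (μ : (Fin m → Bool) → ℝ) (α : ℝ) (R : RandAlg (Fin n × Fin m) L) : ℝ :=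
  ∑ j, R.p j * ∑ x, prodMu μ x *
    (prodLeafScore S f μ (R.T j) x * Real.exp (-(α * ((R.T j).cost x : ℝ))))

/-- Maximum discounted score `DS_α^{μⁿ}(fⁿ)`. -/
noncomputable def DSN (S : ScoreFun) (f : (Fin m → Bool) → Bool)
    (μ : (Fin m → Bool) → ℝ) (α : ℝ) (n : ℕ) : ℝ :=
  ⨆ R : RandAlg (Fin n × Fin m) Unit, dScoreN S f μ α R

/-- Distributional score-weighted query complexity `sR̄̄_γ^{μⁿ}(fⁿ)`. -/
noncomputable def sRdistN (S : ScoreFun) (f : (Fin m → Bool) → Bool)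
    (μ : (Fin m → Bool) → ℝ) (γ : ℝ) (n : ℕ) : ℝ :=
  sInf {c | ∃ R : RandAlg (Fin n × Fin m) Unit,
    γ ≤ algScoreN S f μ R ∧ scostN S f μ R = c}

/-- Worst-case randomized query complexity `R_δ(fⁿ)` of computing `fⁿ` exactly. -/
noncomputable def RwcN (X : Set (Fin m → Bool)) (f : (Fin m → Bool) → Bool)
    (n : ℕ) (δ : ℝ) : ℕ :=
  RwcTask (Xpow n X) (fun x z => z = fpow f x) (fun _ : Fin n → Bool => True) δ

/-- Success-probability score `max_z μ(ℓ ∩ (fⁿ)⁻¹(z))/μ(ℓ)` of a leaf of a tree for `fⁿ`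
under an arbitrary distribution `μ` on `Xⁿ`. -/
noncomputable def succLeafScoreN (f : (Fin m → Bool) → Bool)
    (μ : (Fin n × Fin m → Bool) → ℝ) (t : DTree (Fin n × Fin m) L)
    (x : Fin n × Fin m → Bool) : ℝ :=
  (⨆ z : Fin n → Bool, mass μ (t.leafSet x ∩ {y | fpow f y = z})) / mass μ (t.leafSet x)

/-- Success-probability score of a randomized algorithm for `fⁿ`. -/
noncomputable def succAlgScoreN (f : (Fin m → Bool) → Bool)
    (μ : (Fin n × Fin m → Bool) → ℝ) (R : RandAlg (Fin n × Fin m) L) : ℝ :=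
  ∑ j, R.p j * ∑ x, μ x * succLeafScoreN f μ (R.T j) x

/-- Score-weighted cost of a randomized algorithm for `fⁿ` (success-probability score). -/
noncomputable def succScostN (f : (Fin m → Bool) → Bool)
    (μ : (Fin n × Fin m → Bool) → ℝ) (R : RandAlg (Fin n × Fin m) L) : ℝ :=
  (∑ j, R.p j * ∑ x, μ x * (succLeafScoreN f μ (R.T j) x * ((R.T j).cost x : ℝ))) /
    succAlgScoreN f μ R

/-- Maximum score-weighted distributional query complexity `sR̄̄_δ(fⁿ)`
(success-probability score). -/
noncomputable def succSRmaxN (X : Set (Fin m → Bool)) (f : (Fin m → Bool) → Bool)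
    (n : ℕ) (δ : ℝ) : ℝ :=
  ⨆ μ : InputDist (Fin n × Fin m) (Xpow n X),
    sInf {c | ∃ R : RandAlg (Fin n × Fin m) Unit,
      δ ≤ succAlgScoreN f μ.μ R ∧ succScostN f μ.μ R = c}

/-- Worst-case randomized query complexity of the list-decoding task `LD_ℓⁿ ∘ f`. -/
noncomputable def RwcLD (X : Set (Fin m → Bool)) (f : (Fin m → Bool) → Bool)
    (n ℓ : ℕ) (δ : ℝ) : ℕ :=
  RwcTask (Xpow n X) (fun x S => fpow f x ∈ S)
    (fun S : Finset (Fin n → Bool) => S.card = 2 ^ (n - ℓ)) δ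

open Classical in
/-- Worst-case randomized query complexity of the threshold task `Thr_kⁿ ∘ f`. -/
noncomputable def RwcThr (X : Set (Fin m → Bool)) (f : (Fin m → Bool) → Bool)
    (n k : ℕ) (δ : ℝ) : ℕ :=
  RwcTask (Xpow n X)
    (fun x z => k ≤ (Finset.univ.filter fun i => z i = fpow f x i).card)
    (fun _ : Fin n → Bool => True) δ

open Classical in
/-- Worst-case randomized query complexity of the labelled threshold task `Label_kⁿ ∘ f`. -/
noncomputable def RwcLabel (X : Set (Fin m → Bool)) (f : (Fin m → Bool) → Bool)
    (n k : ℕ) (δ : ℝ) : ℕ :=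
  RwcTask (Xpow n X)
    (fun x z => ∀ i b, z i = some b → fpow f x i = b)
    (fun z : Fin n → Option Bool =>
      (Finset.univ.filter fun i => (z i).isSome).card = k) δ

end Product


section TensorAux

open DTree Finset

variable {m : ℕ} (S : ScoreFun) (f : (Fin m → Bool) → Bool) (α : ℝ)

/-- Discounted score of a single deterministic tree. -/
noncomputable def dsDet (ν : (Fin m → Bool) → ℝ) (t : DTree (Fin m) Unit) : ℝ :=
  ∑ x, ν x * (leafScore S f ν t x * Real.exp (-(α * (t.cost x : ℝ))))

/-- Max discounted score over deterministic trees. -/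
noncomputable def DSd (ν : (Fin m → Bool) → ℝ) : ℝ :=
  ⨆ t : DTree (Fin m) Unit, dsDet S f α ν t

/-- Conditional distribution given the `j`-th bit equals `b`. -/
noncomputable def condD (ν : (Fin m → Bool) → ℝ) (j : Fin m) (b : Bool) :
    (Fin m → Bool) → ℝ :=
  fun y => if y j = b then ν y / (∑ z, if z j = b then ν z else 0) else 0

/-- Probability that the `j`-th bit equals `b`. -/
noncomputable def pb (ν : (Fin m → Bool) → ℝ) (j : Fin m) (b : Bool) : ℝ :=
  ∑ z, if z j = b then ν z else 0

variable {ν : (Fin m → Bool) → ℝ}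

lemma mass_nonneg (hν : ∀ x, 0 ≤ ν x) (A : Set (Fin m → Bool)) : 0 ≤ mass ν A :=
  Finset.sum_nonneg fun x _ => Set.indicator_nonneg (fun y _ => hν y) x

lemma mass_mono (hν : ∀ x, 0 ≤ ν x) {A B : Set (Fin m → Bool)} (h : A ⊆ B) :
    mass ν A ≤ mass ν B :=
  Finset.sum_le_sum fun x _ => Set.indicator_le_indicator_of_subset h (fun y => hν y) x

lemma mass_univ : mass ν Set.univ = ∑ x, ν x := by simp [mass]

lemma mass_eq_zero (hν : ∀ x, 0 ≤ ν x) {A B : Set (Fin m → Bool)} (h : A ⊆ B)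
    (hB : mass ν B = 0) : mass ν A = 0 :=
  le_antisymm (hB ▸ mass_mono hν h) (mass_nonneg hν A)

lemma ratio_nonneg (hν : ∀ x, 0 ≤ ν x) (A B : Set (Fin m → Bool)) :
    0 ≤ mass ν A / mass ν B := div_nonneg (mass_nonneg hν A) (mass_nonneg hν B)

lemma ratio_le_one (hν : ∀ x, 0 ≤ ν x) {A B : Set (Fin m → Bool)} (h : A ⊆ B) :
    mass ν A / mass ν B ≤ 1 := by
  rcases eq_or_ne (mass ν B) 0 with hB | hB
  · simp [hB]
  · exact div_le_one ((mass_nonneg hν B).lt_of_ne' hB) |>.2 (mass_mono hν h)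

lemma ratio_mem (hν : ∀ x, 0 ≤ ν x) {A B : Set (Fin m → Bool)} (h : A ⊆ B) :
    mass ν A / mass ν B ∈ Set.Icc (0:ℝ) 1 :=
  ⟨ratio_nonneg hν A B, ratio_le_one hν h⟩

lemma pb_eq_mass (j : Fin m) (b : Bool) : pb ν j b = mass ν {y | y j = b} := by
  simp [pb, mass, Set.indicator_apply, Set.mem_setOf_eq]

lemma pb_nonneg (hν : ∀ x, 0 ≤ ν x) (j : Fin m) (b : Bool) : 0 ≤ pb ν j b :=
  Finset.sum_nonneg fun x _ => by by_cases h : x j = b <;> simp [h, hν x]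

lemma pb_add (j : Fin m) : pb ν j false + pb ν j true = ∑ x, ν x := by
  rw [pb, pb, ← Finset.sum_add_distrib]
  refine Finset.sum_congr rfl fun x _ => ?_
  cases h : x j <;> simp [h]

lemma condD_nonneg (hν : ∀ x, 0 ≤ ν x) (j : Fin m) (b : Bool) (y : Fin m → Bool) :
    0 ≤ condD ν j b y := by
  unfold condD
  split
  · exact div_nonneg (hν y) (pb_nonneg hν j b)
  · exact le_refl 0

lemma condD_sum_le_one (hν : ∀ x, 0 ≤ ν x) (j : Fin m) (b : Bool) :
    ∑ y, condD ν j b y ≤ 1 := by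
  have : ∑ y, condD ν j b y = pb ν j b / pb ν j b := by
    rw [pb, Finset.sum_div]
    refine Finset.sum_congr rfl fun y _ => ?_
    unfold condD
    split <;> simp
  rw [this]
  rcases eq_or_ne (pb ν j b) 0 with h | h
  · simp [h]
  · simp [div_self h]

lemma condD_sum_one (hν : ∀ x, 0 ≤ ν x) {j : Fin m} {b : Bool} (h : pb ν j b ≠ 0) :
    ∑ y, condD ν j b y = 1 := by
  have : ∑ y, condD ν j b y = pb ν j b / pb ν j b := by
    rw [pb, Finset.sum_div]
    refine Finset.sum_congr rfl fun y _ => ?_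
    unfold condD
    split <;> simp
  rw [this, div_self h]

lemma condD_mul (hν : ∀ x, 0 ≤ ν x) {j : Fin m} {b : Bool} {x : Fin m → Bool}
    (hx : x j = b) : pb ν j b * condD ν j b x = ν x := by
  rcases eq_or_ne (pb ν j b) 0 with h | h
  · have hx0 : ν x = 0 := by
      have hle : (if x j = b then ν x else 0) ≤ pb ν j b :=
        Finset.single_le_sum (f := fun z => if z j = b then ν z else 0)
          (fun z _ => by by_cases hz : z j = b <;> simp [hz, hν z]) (Finset.mem_univ x)
      rw [if_pos hx, h] at hle
      exact le_antisymm hle (hν x)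
    simp [h, hx0]
  · rw [condD, if_pos hx, pb] at *
    field_simp

lemma condD_eq_zero {j : Fin m} {b : Bool} (h : pb ν j b = 0) :
    condD ν j b = fun _ => 0 := by
  funext y
  rw [condD]
  split
  · rw [← pb, h, div_zero]
  · rfl

lemma condD_eq_zero' {j : Fin m} {b : Bool} {x : Fin m → Bool} (hx : x j ≠ b) :
    condD ν j b x = 0 := by rw [condD, if_neg hx]

lemma mass_condD (j : Fin m) (b : Bool) (A : Set (Fin m → Bool)) :
    mass (condD ν j b) A = mass ν ({y | y j = b} ∩ A) / pb ν j b := by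
  rw [mass, mass, Finset.sum_div]
  refine Finset.sum_congr rfl fun x _ => ?_
  classical
  rw [Set.indicator_apply, Set.indicator_apply]
  by_cases hA : x ∈ A
  · by_cases hb : x j = b
    · simp [hA, hb, condD, pb, Set.mem_setOf_eq]
    · simp [hA, hb, condD, pb, Set.mem_setOf_eq]
  · have : x ∉ ({y | y j = b} ∩ A) := fun hc => hA hc.2
    simp [hA, this]

lemma ratio_condD (hν : ∀ x, 0 ≤ ν x) (j : Fin m) (b : Bool) (A C : Set (Fin m → Bool)) :
    mass (condD ν j b) (A ∩ C) / mass (condD ν j b) A =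
      mass ν (({y | y j = b} ∩ A) ∩ C) / mass ν ({y | y j = b} ∩ A) := by
  rw [mass_condD, mass_condD]
  have hassoc : {y | y j = b} ∩ (A ∩ C) = ({y | y j = b} ∩ A) ∩ C :=
    (Set.inter_assoc _ _ _).symm
  rw [hassoc]
  set a := mass ν (({y | y j = b} ∩ A) ∩ C) with ha
  set c := mass ν ({y | y j = b} ∩ A) with hc
  rcases eq_or_ne (pb ν j b) 0 with hP | hP
  · have hc0 : c = 0 := by
      rw [hc]
      refine mass_eq_zero hν Set.inter_subset_left ?_
      rw [← pb_eq_mass, hP]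
    have ha0 : a = 0 := by
      rw [ha]
      exact mass_eq_zero hν (Set.inter_subset_left.trans Set.inter_subset_left)
        (by rw [← pb_eq_mass, hP])
    simp [ha0, hc0]
  · rcases eq_or_ne c 0 with hc0 | hc0
    · have ha0 : a = 0 := by
        rw [ha]; exact mass_eq_zero hν Set.inter_subset_left (hc ▸ hc0)
      simp [ha0, hc0]
    · field_simp

instance {ι L : Type} [Nonempty L] : Nonempty (DTree ι L) :=
  ⟨.leaf (Classical.arbitrary L)⟩

lemma leafScore_half_le (hν : ∀ x, 0 ≤ ν x) (t : DTree (Fin m) Unit) (x : Fin m → Bool) :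
    1 / 2 ≤ leafScore S f ν t x :=
  S.half_le _ (ratio_mem hν Set.inter_subset_left)

lemma leafScore_le_one (hν : ∀ x, 0 ≤ ν x) (t : DTree (Fin m) Unit) (x : Fin m → Bool) :
    leafScore S f ν t x ≤ 1 :=
  S.le_one _ (ratio_mem hν Set.inter_subset_left)

lemma exp_cost_le_one (hα : 0 ≤ α) (c : ℕ) : Real.exp (-(α * (c : ℝ))) ≤ 1 := by
  rw [Real.exp_le_one_iff]
  have : (0:ℝ) ≤ α * (c:ℝ) := mul_nonneg hα (Nat.cast_nonneg c)
  linarith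

lemma dsDet_nonneg (hν : ∀ x, 0 ≤ ν x) (t : DTree (Fin m) Unit) :
    0 ≤ dsDet S f α ν t :=
  Finset.sum_nonneg fun x _ => mul_nonneg (hν x) (mul_nonneg
    (le_trans (by norm_num) (leafScore_half_le S f hν t x)) (Real.exp_pos _).le)

lemma dsDet_le_sum (hα : 0 ≤ α) (hν : ∀ x, 0 ≤ ν x) (t : DTree (Fin m) Unit) :
    dsDet S f α ν t ≤ ∑ x, ν x := by
  refine Finset.sum_le_sum fun x _ => ?_
  have h1 : leafScore S f ν t x * Real.exp (-(α * ((t.cost x : ℕ) : ℝ))) ≤ 1 :=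
    mul_le_one₀ (leafScore_le_one S f hν t x)
      (Real.exp_pos _).le (exp_cost_le_one α hα _)
  nlinarith [hν x]

lemma dsDet_le_one (hα : 0 ≤ α) (hν : ∀ x, 0 ≤ ν x) (hs : ∑ x, ν x ≤ 1)
    (t : DTree (Fin m) Unit) : dsDet S f α ν t ≤ 1 :=
  (dsDet_le_sum S f α hα hν t).trans hs

lemma DSd_bdd (hα : 0 ≤ α) (hν : ∀ x, 0 ≤ ν x) (hs : ∑ x, ν x ≤ 1) :
    BddAbove (Set.range (dsDet S f α ν)) :=
  ⟨1, by rintro _ ⟨t, rfl⟩; exact dsDet_le_one S f α hα hν hs t⟩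

lemma dsDet_le_DSd (hα : 0 ≤ α) (hν : ∀ x, 0 ≤ ν x) (hs : ∑ x, ν x ≤ 1)
    (t : DTree (Fin m) Unit) : dsDet S f α ν t ≤ DSd S f α ν :=
  le_ciSup (DSd_bdd S f α hα hν hs) t

lemma DSd_le_one (hα : 0 ≤ α) (hν : ∀ x, 0 ≤ ν x) (hs : ∑ x, ν x ≤ 1) :
    DSd S f α ν ≤ 1 :=
  ciSup_le fun t => dsDet_le_one S f α hα hν hs t

lemma DSd_nonneg (hα : 0 ≤ α) (hν : ∀ x, 0 ≤ ν x) (hs : ∑ x, ν x ≤ 1) :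
    0 ≤ DSd S f α ν :=
  (dsDet_nonneg S f α hν (.leaf ())).trans (dsDet_le_DSd S f α hα hν hs _)

lemma dsDet_leaf (hs : ∑ x, ν x = 1) :
    dsDet S f α ν (.leaf ()) = S.φ (mass ν {y | f y = true}) := by
  have hls : ∀ x : Fin m → Bool, leafScore S f ν (DTree.leaf ()) x
      = S.φ (mass ν {y | f y = true}) := by
    intro x
    rw [leafScore]
    congr 1
    show mass ν (Set.univ ∩ _) / mass ν Set.univ = _
    rw [Set.univ_inter, mass_univ, hs, div_one]
  rw [dsDet]
  simp only [hls, DTree.cost, Nat.cast_zero, mul_zero, neg_zero, Real.exp_zero, mul_one]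
  rw [← Finset.sum_mul, hs, one_mul]

lemma half_le_DSd (hα : 0 ≤ α) (hν : ∀ x, 0 ≤ ν x) (hs : ∑ x, ν x = 1) :
    1 / 2 ≤ DSd S f α ν := by
  refine le_trans ?_ (dsDet_le_DSd S f α hα hν hs.le (.leaf ()))
  rw [dsDet_leaf S f α hs]
  refine S.half_le _ ⟨mass_nonneg hν _, ?_⟩
  have := mass_mono hν (Set.subset_univ {y | f y = true})
  rw [mass_univ, hs] at this
  exact this

lemma DSd_approx (hα : 0 ≤ α) (hν : ∀ x, 0 ≤ ν x) (hs : ∑ x, ν x ≤ 1)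
    {ε : ℝ} (hε : 0 < ε) : ∃ t, DSd S f α ν ≤ dsDet S f α ν t + ε := by
  have hne : (Set.range (dsDet S f α ν)).Nonempty := ⟨_, ⟨DTree.leaf (), rfl⟩⟩
  have hlt : DSd S f α ν - ε < sSup (Set.range (dsDet S f α ν)) := by
    rw [DSd, iSup] at *
    linarith
  obtain ⟨_, ⟨t, rfl⟩, ht⟩ := exists_lt_of_lt_csSup hne hlt
  exact ⟨t, by linarith⟩

lemma mem_leafSet_self {ι L : Type} (t : DTree ι L) (x : ι → Bool) : x ∈ t.leafSet x := by
  induction t with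
  | leaf lab => exact Set.mem_univ x
  | node i t0 t1 ih0 ih1 =>
    refine ⟨rfl, ?_⟩
    by_cases h : x i = true <;> simp [h, ih0, ih1]

lemma dsDet_node (hν : ∀ x, 0 ≤ ν x) (j : Fin m) (s0 s1 : DTree (Fin m) Unit) :
    dsDet S f α ν (.node j s0 s1) = Real.exp (-α) *
      (pb ν j false * dsDet S f α (condD ν j false) s0 +
       pb ν j true * dsDet S f α (condD ν j true) s1) := by
  rw [dsDet, dsDet, dsDet, Finset.mul_sum, Finset.mul_sum, ← Finset.sum_add_distrib,
    Finset.mul_sum]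
  refine Finset.sum_congr rfl fun x _ => ?_
  have hcost : ∀ b : Bool, x j = b →
      ((DTree.node j s0 s1).cost x : ℝ) = ((if b then s1 else s0).cost x : ℝ) + 1 := by
    intro b hb
    rw [DTree.cost]
    cases b <;> simp [hb]
  have hexp : ∀ b : Bool, x j = b →
      Real.exp (-(α * ((DTree.node j s0 s1).cost x : ℝ))) =
        Real.exp (-α) * Real.exp (-(α * (((if b then s1 else s0).cost x : ℕ) : ℝ))) := by
    intro b hb
    rw [← Real.exp_add, hcost b hb]
    congr 1
    ring
  have hls : ∀ b : Bool, x j = b →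
      leafScore S f ν (DTree.node j s0 s1) x =
        leafScore S f (condD ν j b) (if b then s1 else s0) x := by
    intro b hb
    rw [leafScore, leafScore]
    have hlset : (DTree.node j s0 s1).leafSet x =
        {y | y j = b} ∩ (if b then s1 else s0).leafSet x := by
      rw [DTree.leafSet]
      cases b <;> simp [hb]
    rw [hlset, ratio_condD hν j b]
  cases hb : x j with
  | false =>
    have h1 : condD ν j true x = 0 := condD_eq_zero' (by simp [hb])
    have h2 : pb ν j false * condD ν j false x = ν x := condD_mul hν hb
    rw [hexp false hb, hls false hb]
    simp only [↓reduceIte, Bool.false_eq_true, if_false]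
    rw [h1, ← h2]
    ring
  | true =>
    have h1 : condD ν j false x = 0 := condD_eq_zero' (by simp [hb])
    have h2 : pb ν j true * condD ν j true x = ν x := condD_mul hν hb
    rw [hexp true hb, hls true hb]
    simp only [↓reduceIte]
    rw [h1, ← h2]
    ring


lemma super (hα : 0 ≤ α) (hν : ∀ x, 0 ≤ ν x) (hs : ∑ x, ν x = 1) (j : Fin m) :
    Real.exp (-α) * (pb ν j false * DSd S f α (condD ν j false) +
      pb ν j true * DSd S f α (condD ν j true)) ≤ DSd S f α ν := by
  refine le_of_forall_pos_le_add fun ε hε => ?_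
  obtain ⟨s0, hs0⟩ := DSd_approx S f α hα (condD_nonneg hν j false)
    (condD_sum_le_one hν j false) hε
  obtain ⟨s1, hs1⟩ := DSd_approx S f α hα (condD_nonneg hν j true)
    (condD_sum_le_one hν j true) hε
  have hnode : dsDet S f α ν (.node j s0 s1) ≤ DSd S f α ν :=
    dsDet_le_DSd S f α hα hν hs.le _
  rw [dsDet_node S f α hν j s0 s1] at hnode
  have hexp1 : Real.exp (-α) ≤ 1 := Real.exp_le_one_iff.2 (by linarith)
  have hexp0 : 0 < Real.exp (-α) := Real.exp_pos _
  have hp0 : 0 ≤ pb ν j false := pb_nonneg hν j false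
  have hp1 : 0 ≤ pb ν j true := pb_nonneg hν j true
  have hpsum : pb ν j false + pb ν j true = 1 := by rw [pb_add, hs]
  have h3 : pb ν j false * DSd S f α (condD ν j false) +
      pb ν j true * DSd S f α (condD ν j true) ≤
      pb ν j false * dsDet S f α (condD ν j false) s0 +
        pb ν j true * dsDet S f α (condD ν j true) s1 + ε := by
    nlinarith [mul_le_mul_of_nonneg_left hs0 hp0, mul_le_mul_of_nonneg_left hs1 hp1]
  have h4 := mul_le_mul_of_nonneg_left h3 hexp0.le
  have h5 : Real.exp (-α) * ε ≤ ε := mul_le_of_le_one_left hε.le hexp1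
  nlinarith [h4, h5, hnode]

variable {n : ℕ}

/-- Value of a deterministic tree for `fⁿ` under a tuple of block distributions. -/
noncomputable def ValN (ν : Fin n → (Fin m → Bool) → ℝ)
    (t : DTree (Fin n × Fin m) Unit) : ℝ :=
  ∑ x, (∏ i, ν i (block x i)) *
    ((∏ i, S.φ (mass (ν i) (blockSet t x i ∩ {y | f y = true}) /
        mass (ν i) (blockSet t x i))) * Real.exp (-(α * (t.cost x : ℝ))))

lemma sum_prod_block (g : Fin n → (Fin m → Bool) → ℝ) :
    ∑ x : (Fin n × Fin m → Bool), ∏ i, g i (block x i) = ∏ i, ∑ y, g i y := by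
  classical
  rw [Finset.prod_univ_sum]
  rw [Fintype.piFinset_univ]
  exact Fintype.sum_equiv (Equiv.curry (Fin n) (Fin m) Bool).symm _ _ (fun h => rfl) |>.symm

lemma blockSet_leaf (lab : Unit) (x : Fin n × Fin m → Bool) (i : Fin n) :
    blockSet (DTree.leaf lab) x i = Set.univ := by
  ext y; simp [blockSet, DTree.leafSet]

lemma blockSet_node (i₀ : Fin n) (j₀ : Fin m) (t0 t1 : DTree (Fin n × Fin m) Unit)
    (x : Fin n × Fin m → Bool) (i : Fin n) :
    blockSet (DTree.node (i₀, j₀) t0 t1) x i =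
      (if i = i₀ then {y : Fin m → Bool | y j₀ = x (i₀, j₀)} else Set.univ) ∩
        blockSet (if x (i₀, j₀) then t1 else t0) x i := by
  ext y
  by_cases hi : i = i₀
  · subst hi
    cases hxb : x (i, j₀) <;>
      simp [blockSet, DTree.leafSet, hxb, Set.mem_setOf_eq]
  · have hne : ¬ (i₀ = i) := fun h => hi h.symm
    cases hxb : x (i₀, j₀) <;>
      simp [blockSet, DTree.leafSet, hxb, Set.mem_setOf_eq, hne, hi]

lemma ValN_term {ν : Fin n → (Fin m → Bool) → ℝ} (hν : ∀ i x, 0 ≤ ν i x)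
    {i₀ : Fin n} {j₀ : Fin m} {b : Bool} {x : Fin n × Fin m → Bool}
    {t0 t1 s : DTree (Fin n × Fin m) Unit}
    (hb : block x i₀ j₀ = b)
    (hcost : (DTree.node (i₀, j₀) t0 t1).cost x = s.cost x + 1)
    (hbs : ∀ i, blockSet (DTree.node (i₀, j₀) t0 t1) x i =
      (if i = i₀ then {y : Fin m → Bool | y j₀ = b} else Set.univ) ∩ blockSet s x i) :
    (∏ i, ν i (block x i)) *
      ((∏ i, S.φ (mass (ν i) (blockSet (DTree.node (i₀, j₀) t0 t1) x i ∩ {y | f y = true}) /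
          mass (ν i) (blockSet (DTree.node (i₀, j₀) t0 t1) x i))) *
        Real.exp (-(α * (((DTree.node (i₀, j₀) t0 t1).cost x : ℕ) : ℝ)))) =
    Real.exp (-α) * (pb (ν i₀) j₀ b *
      ((∏ i, Function.update ν i₀ (condD (ν i₀) j₀ b) i (block x i)) *
        ((∏ i, S.φ (mass (Function.update ν i₀ (condD (ν i₀) j₀ b) i)
            (blockSet s x i ∩ {y | f y = true}) /
          mass (Function.update ν i₀ (condD (ν i₀) j₀ b) i) (blockSet s x i))) *
          Real.exp (-(α * ((s.cost x : ℕ) : ℝ)))))) := by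
  have hw : pb (ν i₀) j₀ b *
      ∏ i, Function.update ν i₀ (condD (ν i₀) j₀ b) i (block x i) =
      ∏ i, ν i (block x i) := by
    have e1 : ∏ i, Function.update ν i₀ (condD (ν i₀) j₀ b) i (block x i) =
        condD (ν i₀) j₀ b (block x i₀) * ∏ i ∈ Finset.univ.erase i₀, ν i (block x i) := by
      rw [← Finset.mul_prod_erase Finset.univ _ (Finset.mem_univ i₀), Function.update_self]
      exact congrArg _ (Finset.prod_congr rfl fun i hi => by
        rw [Function.update_of_ne (Finset.mem_erase.1 hi).1])
    have e2 : ∏ i, ν i (block x i) =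
        ν i₀ (block x i₀) * ∏ i ∈ Finset.univ.erase i₀, ν i (block x i) :=
      (Finset.mul_prod_erase _ _ (Finset.mem_univ i₀)).symm
    rw [e1, e2, ← mul_assoc, condD_mul (hν i₀) hb]
  have hsc : (∏ i, S.φ (mass (ν i)
        (blockSet (DTree.node (i₀, j₀) t0 t1) x i ∩ {y | f y = true}) /
          mass (ν i) (blockSet (DTree.node (i₀, j₀) t0 t1) x i))) =
      ∏ i, S.φ (mass (Function.update ν i₀ (condD (ν i₀) j₀ b) i)
            (blockSet s x i ∩ {y | f y = true}) /
          mass (Function.update ν i₀ (condD (ν i₀) j₀ b) i) (blockSet s x i)) := by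
    refine Finset.prod_congr rfl fun i _ => ?_
    by_cases hi : i = i₀
    · subst hi
      rw [hbs i, if_pos rfl, Function.update_self]
      exact congrArg S.φ (ratio_condD (hν i) j₀ b _ _).symm
    · rw [hbs i, if_neg hi, Set.univ_inter, Function.update_of_ne hi]
  have hexp : Real.exp (-(α * (((DTree.node (i₀, j₀) t0 t1).cost x : ℕ) : ℝ))) =
      Real.exp (-α) * Real.exp (-(α * ((s.cost x : ℕ) : ℝ))) := by
    rw [← Real.exp_add, hcost]
    congr 1
    push_cast
    ring
  rw [hsc, hexp, ← hw]
  ring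

lemma ValN_node {ν : Fin n → (Fin m → Bool) → ℝ} (hν : ∀ i x, 0 ≤ ν i x)
    (i₀ : Fin n) (j₀ : Fin m) (t0 t1 : DTree (Fin n × Fin m) Unit) :
    ValN S f α ν (.node (i₀, j₀) t0 t1) = Real.exp (-α) *
      (pb (ν i₀) j₀ false *
          ValN S f α (Function.update ν i₀ (condD (ν i₀) j₀ false)) t0 +
       pb (ν i₀) j₀ true *
          ValN S f α (Function.update ν i₀ (condD (ν i₀) j₀ true)) t1) := by
  rw [ValN, ValN, ValN, Finset.mul_sum, Finset.mul_sum, ← Finset.sum_add_distrib,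
    Finset.mul_sum]
  refine Finset.sum_congr rfl fun x _ => ?_
  cases hb : x (i₀, j₀) with
  | false =>
    have hz : ∏ i, Function.update ν i₀ (condD (ν i₀) j₀ true) i (block x i) = 0 := by
      refine Finset.prod_eq_zero (Finset.mem_univ i₀) ?_
      rw [Function.update_self]
      exact condD_eq_zero' (by simp [block, hb])
    have hmain := ValN_term S f α hν (i₀ := i₀) (j₀ := j₀) (b := false)
      (x := x) (t0 := t0) (t1 := t1) (s := t0) hb
      (by rw [DTree.cost]; simp [hb])
      (fun i => by rw [blockSet_node]; simp [hb])
    rw [hmain, hz]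
    ring
  | true =>
    have hz : ∏ i, Function.update ν i₀ (condD (ν i₀) j₀ false) i (block x i) = 0 := by
      refine Finset.prod_eq_zero (Finset.mem_univ i₀) ?_
      rw [Function.update_self]
      exact condD_eq_zero' (by simp [block, hb])
    have hmain := ValN_term S f α hν (i₀ := i₀) (j₀ := j₀) (b := true)
      (x := x) (t0 := t0) (t1 := t1) (s := t1) hb
      (by rw [DTree.cost]; simp [hb])
      (fun i => by rw [blockSet_node]; simp [hb])
    rw [hmain, hz]
    ring

lemma ValN_nonneg {ν : Fin n → (Fin m → Bool) → ℝ} (hν : ∀ i x, 0 ≤ ν i x)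
    (t : DTree (Fin n × Fin m) Unit) : 0 ≤ ValN S f α ν t := by
  refine Finset.sum_nonneg fun x _ => mul_nonneg
    (Finset.prod_nonneg fun i _ => hν i _)
    (mul_nonneg (Finset.prod_nonneg fun i _ => ?_) (Real.exp_pos _).le)
  exact le_trans (by norm_num) (S.half_le _ (ratio_mem (hν i) Set.inter_subset_left))

lemma ValN_le_one (hα : 0 ≤ α) {ν : Fin n → (Fin m → Bool) → ℝ}
    (hν : ∀ i x, 0 ≤ ν i x) (hs : ∀ i, ∑ x, ν i x = 1)
    (t : DTree (Fin n × Fin m) Unit) : ValN S f α ν t ≤ 1 := by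
  have hb : ValN S f α ν t ≤ ∑ x, ∏ i, ν i (block x i) := by
    refine Finset.sum_le_sum fun x _ => ?_
    have hsc : (∏ i, S.φ (mass (ν i) (blockSet t x i ∩ {y | f y = true}) /
        mass (ν i) (blockSet t x i))) *
        Real.exp (-(α * ((t.cost x : ℕ) : ℝ))) ≤ 1 := by
      refine mul_le_one₀ (Finset.prod_le_one (fun i _ => ?_) (fun i _ => ?_)) (Real.exp_pos _).le
        (exp_cost_le_one α hα _)
      · exact le_trans (by norm_num) (S.half_le _ (ratio_mem (hν i) Set.inter_subset_left))
      · exact S.le_one _ (ratio_mem (hν i) Set.inter_subset_left)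
    nlinarith [Finset.prod_nonneg (fun i (_ : i ∈ Finset.univ) => hν i (block x i))]
  rw [sum_prod_block] at hb
  refine hb.trans ?_
  rw [Finset.prod_congr rfl fun i _ => hs i, Finset.prod_const_one]

lemma ValN_le (hα : 0 ≤ α) (t : DTree (Fin n × Fin m) Unit) :
    ∀ ν : Fin n → (Fin m → Bool) → ℝ,
      (∀ i x, 0 ≤ ν i x) → (∀ i, ∑ x, ν i x = 1) →
      ValN S f α ν t ≤ ∏ i, DSd S f α (ν i) := by
  induction t with
  | leaf lab =>
    intro ν hν hs
    have hterm : ∀ x : Fin n × Fin m → Bool,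
        (∏ i, ν i (block x i)) *
          ((∏ i, S.φ (mass (ν i) (blockSet (DTree.leaf lab) x i ∩ {y | f y = true}) /
            mass (ν i) (blockSet (DTree.leaf lab) x i))) *
            Real.exp (-(α * (((DTree.leaf lab : DTree (Fin n × Fin m) Unit).cost x : ℕ) : ℝ)))) =
        (∏ i, ν i (block x i)) * ∏ i, S.φ (mass (ν i) {y | f y = true}) := by
      intro x
      have : ∀ i, blockSet (DTree.leaf lab) x i = Set.univ := fun i => blockSet_leaf lab x i
      simp only [this, Set.univ_inter, DTree.cost, Nat.cast_zero, mul_zero, neg_zero,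
        Real.exp_zero, mul_one, mass_univ, hs, div_one]
    rw [ValN]
    rw [Finset.sum_congr rfl fun x _ => hterm x, ← Finset.sum_mul, sum_prod_block,
      Finset.prod_congr rfl fun i _ => hs i, Finset.prod_const_one, one_mul]
    refine Finset.prod_le_prod (fun i _ => ?_) (fun i _ => ?_)
    · refine le_trans (by norm_num) (S.half_le _ ⟨mass_nonneg (hν i) _, ?_⟩)
      have := mass_mono (hν i) (Set.subset_univ {y | f y = true})
      rw [mass_univ, hs i] at this
      exact this
    · have := dsDet_leaf S f α (ν := ν i) (hs i)
      rw [← this]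
      exact dsDet_le_DSd S f α hα (hν i) (hs i).le _
  | node q t0 t1 ih0 ih1 =>
    rcases q with ⟨i₀, j₀⟩
    intro ν hν hs
    set E := ∏ i ∈ Finset.univ.erase i₀, DSd S f α (ν i) with hE
    have hEnn : 0 ≤ E :=
      Finset.prod_nonneg fun i _ => DSd_nonneg S f α hα (hν i) (hs i).le
    have hkey : ∀ (b : Bool) (tb : DTree (Fin n × Fin m) Unit),
        (∀ ν', (∀ i x, 0 ≤ ν' i x) → (∀ i, ∑ x, ν' i x = 1) →
          ValN S f α ν' tb ≤ ∏ i, DSd S f α (ν' i)) →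
        ValN S f α (Function.update ν i₀ (condD (ν i₀) j₀ b)) tb ≤
          DSd S f α (condD (ν i₀) j₀ b) * E := by
      intro b tb ih
      rcases eq_or_ne (pb (ν i₀) j₀ b) 0 with hP | hP
      · have hzero : ValN S f α (Function.update ν i₀ (condD (ν i₀) j₀ b)) tb = 0 := by
          rw [ValN]
          refine Finset.sum_eq_zero fun x _ => ?_
          have : ∏ i, Function.update ν i₀ (condD (ν i₀) j₀ b) i (block x i) = 0 := by
            refine Finset.prod_eq_zero (Finset.mem_univ i₀) ?_
            rw [Function.update_self, condD_eq_zero hP]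
          rw [this, zero_mul]
        have hD : DSd S f α (condD (ν i₀) j₀ b) = 0 := by
          rw [condD_eq_zero hP, DSd]
          have : ∀ t : DTree (Fin m) Unit, dsDet S f α (fun _ => (0:ℝ)) t = 0 := by
            intro t; rw [dsDet]; simp
          simp only [this, ciSup_const]
        rw [hzero, hD, zero_mul]
      · have hcd : ∀ i x, 0 ≤ Function.update ν i₀ (condD (ν i₀) j₀ b) i x := by
          intro i x
          by_cases hi : i = i₀
          · subst hi; rw [Function.update_self]; exact condD_nonneg (hν i) j₀ b x
          · rw [Function.update_of_ne hi]; exact hν i x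
        have hcs : ∀ i, ∑ x, Function.update ν i₀ (condD (ν i₀) j₀ b) i x = 1 := by
          intro i
          by_cases hi : i = i₀
          · subst hi; rw [Function.update_self]; exact condD_sum_one (hν i) hP
          · rw [Function.update_of_ne hi]; exact hs i
        refine (ih _ hcd hcs).trans ?_
        rw [← Finset.mul_prod_erase Finset.univ _ (Finset.mem_univ i₀),
          Function.update_self, hE]
        refine le_of_eq (congrArg _ (Finset.prod_congr rfl fun i hi => ?_))
        rw [Function.update_of_ne (Finset.mem_erase.1 hi).1]
    have h0 := hkey false t0 ih0
    have h1 := hkey true t1 ih1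
    rw [ValN_node S f α hν i₀ j₀ t0 t1]
    have hsup := super S f α hα (hν i₀) (hs i₀) j₀
    have hp0 : 0 ≤ pb (ν i₀) j₀ false := pb_nonneg (hν i₀) j₀ false
    have hp1 : 0 ≤ pb (ν i₀) j₀ true := pb_nonneg (hν i₀) j₀ true
    have hexp : (0:ℝ) < Real.exp (-α) := Real.exp_pos _
    have hprod : ∏ i, DSd S f α (ν i) = DSd S f α (ν i₀) * E :=
      (Finset.mul_prod_erase _ _ (Finset.mem_univ i₀)).symm
    rw [hprod]
    calc Real.exp (-α) *
        (pb (ν i₀) j₀ false * ValN S f α (Function.update ν i₀ (condD (ν i₀) j₀ false)) t0 +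
         pb (ν i₀) j₀ true * ValN S f α (Function.update ν i₀ (condD (ν i₀) j₀ true)) t1)
        ≤ Real.exp (-α) *
          (pb (ν i₀) j₀ false * (DSd S f α (condD (ν i₀) j₀ false) * E) +
           pb (ν i₀) j₀ true * (DSd S f α (condD (ν i₀) j₀ true) * E)) := by
          refine mul_le_mul_of_nonneg_left (add_le_add ?_ ?_) hexp.le
          · exact mul_le_mul_of_nonneg_left h0 hp0
          · exact mul_le_mul_of_nonneg_left h1 hp1
      _ = (Real.exp (-α) *
          (pb (ν i₀) j₀ false * DSd S f α (condD (ν i₀) j₀ false) +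
           pb (ν i₀) j₀ true * DSd S f α (condD (ν i₀) j₀ true))) * E := by ring
      _ ≤ DSd S f α (ν i₀) * E := mul_le_mul_of_nonneg_right hsup hEnn

/-- Relabel a single-block tree as a tree on the product domain querying block `i`. -/
def liftT (i : Fin n) : DTree (Fin m) Unit → DTree (Fin n × Fin m) Unit
  | .leaf l => .leaf l
  | .node j a b => .node (i, j) (liftT i a) (liftT i b)

/-- Replace every leaf of the first tree by the second tree. -/
def graftT {ι L : Type} : DTree ι L → DTree ι L → DTree ι L
  | .leaf _, s => s
  | .node j a b, s => .node j (graftT a s) (graftT b s)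

lemma graftT_cost {ι L : Type} (a s : DTree ι L) (x : ι → Bool) :
    (graftT a s).cost x = a.cost x + s.cost x := by
  induction a with
  | leaf l => simp [graftT, DTree.cost]
  | node j u v ihu ihv =>
    cases h : x j <;> simp [graftT, DTree.cost, h, ihu, ihv] <;> omega

lemma graftT_leafSet {ι L : Type} (a s : DTree ι L) (x : ι → Bool) :
    (graftT a s).leafSet x = a.leafSet x ∩ s.leafSet x := by
  induction a with
  | leaf l => simp [graftT, DTree.leafSet]
  | node j u v ihu ihv =>
    cases h : x j <;>
      simp [graftT, DTree.leafSet, h, ihu, ihv, Set.inter_assoc]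

lemma liftT_cost (i : Fin n) (t : DTree (Fin m) Unit) (x : Fin n × Fin m → Bool) :
    (liftT i t).cost x = t.cost (block x i) := by
  induction t with
  | leaf l => simp [liftT, DTree.cost]
  | node j u v ihu ihv =>
    have hx : x (i, j) = block x i j := rfl
    cases h : x (i, j) <;>
      simp [liftT, DTree.cost, h, ihu, ihv, block, ← hx]

lemma liftT_leafSet (i : Fin n) (t : DTree (Fin m) Unit) (x : Fin n × Fin m → Bool) :
    (liftT i t).leafSet x = {y | block y i ∈ t.leafSet (block x i)} := by
  induction t with
  | leaf l => simp [liftT, DTree.leafSet]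
  | node j u v ihu ihv =>
    have hx : x (i, j) = block x i j := rfl
    ext y
    cases h : x (i, j) <;>
      simp [liftT, DTree.leafSet, h, ihu, ihv, block, ← hx, Set.mem_setOf_eq]

/-- The product tree running `t` on every block. -/
def bigT (n : ℕ) (t : DTree (Fin m) Unit) : DTree (Fin n × Fin m) Unit :=
  (List.finRange n).foldr (fun i acc => graftT (liftT i t) acc) (.leaf ())

lemma bigTl_cost (l : List (Fin n)) (t : DTree (Fin m) Unit) (x : Fin n × Fin m → Bool) :
    (l.foldr (fun i acc => graftT (liftT i t) acc) (.leaf ())).cost x =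
      (l.map fun i => t.cost (block x i)).sum := by
  induction l with
  | nil => simp [DTree.cost]
  | cons i l ih => simp [graftT_cost, liftT_cost, ih]

lemma bigTl_leafSet (l : List (Fin n)) (t : DTree (Fin m) Unit) (x : Fin n × Fin m → Bool) :
    (l.foldr (fun i acc => graftT (liftT i t) acc) (.leaf ())).leafSet x =
      {y | ∀ i ∈ l, block y i ∈ t.leafSet (block x i)} := by
  induction l with
  | nil => ext y; simp [DTree.leafSet]
  | cons i l ih =>
    ext y
    simp [graftT_leafSet, liftT_leafSet, ih, List.mem_cons, forall_eq_or_imp]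

lemma bigT_cost (t : DTree (Fin m) Unit) (x : Fin n × Fin m → Bool) :
    (bigT n t).cost x = ∑ i, t.cost (block x i) :=
  (bigTl_cost _ t x).trans (Fin.sum_univ_def _).symm

lemma blockSet_bigT (t : DTree (Fin m) Unit) (x : Fin n × Fin m → Bool) (i : Fin n) :
    blockSet (bigT n t) x i = t.leafSet (block x i) := by
  have hpatch : ∀ y (i' : Fin n),
      block (fun q : Fin n × Fin m => if q.1 = i then y q.2 else x q) i' =
        if i' = i then y else block x i' := by
    intro y i'
    by_cases h : i' = i <;> funext j <;> simp [block, h]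
  ext y
  rw [blockSet, Set.mem_setOf_eq, bigT, bigTl_leafSet, Set.mem_setOf_eq]
  constructor
  · intro h
    have := h i (List.mem_finRange i)
    rwa [hpatch y i, if_pos rfl] at this
  · intro hy i' _
    rw [hpatch y i']
    by_cases h : i' = i
    · rwa [if_pos h, h]
    · rw [if_neg h]
      exact mem_leafSet_self t (block x i')

lemma ValN_bigT {ν : (Fin m → Bool) → ℝ} (t : DTree (Fin m) Unit) :
    ValN S f α (fun _ : Fin n => ν) (bigT n t) = (dsDet S f α ν t) ^ n := by
  rw [ValN]
  have hterm : ∀ x : Fin n × Fin m → Bool,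
      (∏ i, ν (block x i)) *
        ((∏ i, S.φ (mass ν (blockSet (bigT n t) x i ∩ {y | f y = true}) /
            mass ν (blockSet (bigT n t) x i))) *
          Real.exp (-(α * (((bigT n t).cost x : ℕ) : ℝ)))) =
      ∏ i, (ν (block x i) * (leafScore S f ν t (block x i) *
        Real.exp (-(α * ((t.cost (block x i) : ℕ) : ℝ))))) := by
    intro x
    have hexp : Real.exp (-(α * (((bigT n t).cost x : ℕ) : ℝ))) =
        ∏ i, Real.exp (-(α * ((t.cost (block x i) : ℕ) : ℝ))) := by
      rw [← Real.exp_sum]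
      congr 1
      rw [bigT_cost]
      push_cast
      rw [Finset.mul_sum]
      exact (Finset.sum_neg_distrib _).symm
    have hsc : ∀ i : Fin n, S.φ (mass ν (blockSet (bigT n t) x i ∩ {y | f y = true}) /
        mass ν (blockSet (bigT n t) x i)) = leafScore S f ν t (block x i) := by
      intro i
      rw [blockSet_bigT, leafScore]
    rw [Finset.prod_congr rfl fun i _ => hsc i, hexp, ← Finset.prod_mul_distrib,
      ← Finset.prod_mul_distrib]
  rw [Finset.sum_congr rfl fun x _ => hterm x,
    sum_prod_block (fun _ y => ν y *
      (leafScore S f ν t y * Real.exp (-(α * ((t.cost y : ℕ) : ℝ)))))]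
  have hd : ∀ i : Fin n, (∑ y, ν y * (leafScore S f ν t y *
      Real.exp (-(α * ((t.cost y : ℕ) : ℝ))))) = dsDet S f α ν t := fun _ => rfl
  rw [Finset.prod_congr rfl fun i _ => hd i, Finset.prod_const, Finset.card_univ,
    Fintype.card_fin]

/-- The deterministic algorithm given by a single tree. -/
def detAlg {ι : Type} (t : DTree ι Unit) : RandAlg ι Unit :=
  ⟨1, fun _ => 1, fun _ => t, fun _ => zero_le_one, by simp⟩

instance {ι : Type} : Nonempty (RandAlg ι Unit) := ⟨detAlg (.leaf ())⟩


lemma dScore_detAlg {ν : (Fin m → Bool) → ℝ} (t : DTree (Fin m) Unit) :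
    dScore S f ν α (detAlg t) = dsDet S f α ν t := by
  rw [dScore, dsDet]
  show ∑ _j : Fin 1, (1:ℝ) * ∑ x, ν x * (leafScore S f ν t x * Real.exp (-(α * ((t.cost x : ℕ) : ℝ)))) = _
  simp [detAlg]

lemma dScore_eq_sum {ν : (Fin m → Bool) → ℝ} (R : RandAlg (Fin m) Unit) :
    dScore S f ν α R = ∑ j, R.p j * dsDet S f α ν (R.T j) := rfl

lemma DS_eq_DSd (hα : 0 ≤ α) {ν : (Fin m → Bool) → ℝ} (hν : ∀ x, 0 ≤ ν x)
    (hs : ∑ x, ν x = 1) : DS S f ν α = DSd S f α ν := by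
  refine le_antisymm (ciSup_le fun R => ?_) (ciSup_le fun t => ?_)
  · rw [dScore_eq_sum]
    calc ∑ j, R.p j * dsDet S f α ν (R.T j)
        ≤ ∑ j, R.p j * DSd S f α ν := Finset.sum_le_sum fun j _ =>
          mul_le_mul_of_nonneg_left (dsDet_le_DSd S f α hα hν hs.le _) (R.p_nonneg j)
      _ = DSd S f α ν := by rw [← Finset.sum_mul, R.p_sum, one_mul]
  · rw [← dScore_detAlg S f α t]
    refine le_ciSup ⟨1, ?_⟩ (detAlg t)
    rintro _ ⟨R, rfl⟩
    rw [dScore_eq_sum]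
    calc ∑ j, R.p j * dsDet S f α ν (R.T j)
        ≤ ∑ j, R.p j * 1 := Finset.sum_le_sum fun j _ =>
          mul_le_mul_of_nonneg_left (dsDet_le_one S f α hα hν hs.le _) (R.p_nonneg j)
      _ = 1 := by rw [← Finset.sum_mul, R.p_sum, one_mul]

lemma dScoreN_eq_sum {ν : (Fin m → Bool) → ℝ} (R : RandAlg (Fin n × Fin m) Unit) :
    dScoreN S f ν α R = ∑ j, R.p j * ValN S f α (fun _ : Fin n => ν) (R.T j) := rfl

lemma dScoreN_detAlg {ν : (Fin m → Bool) → ℝ} (t : DTree (Fin n × Fin m) Unit) :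
    dScoreN S f ν α (detAlg t) = ValN S f α (fun _ : Fin n => ν) t := by
  rw [dScoreN_eq_sum]
  show ∑ _j : Fin 1, (1:ℝ) * ValN S f α (fun _ : Fin n => ν) t = _
  simp [detAlg]

lemma dScoreN_bdd (hα : 0 ≤ α) {ν : (Fin m → Bool) → ℝ} (hν : ∀ x, 0 ≤ ν x)
    (hs : ∑ x, ν x = 1) :
    BddAbove (Set.range (fun R : RandAlg (Fin n × Fin m) Unit => dScoreN S f ν α R)) := by
  refine ⟨1, ?_⟩
  rintro _ ⟨R, rfl⟩
  show dScoreN S f ν α R ≤ 1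
  rw [dScoreN_eq_sum]
  calc ∑ j, R.p j * ValN S f α (fun _ : Fin n => ν) (R.T j)
      ≤ ∑ j, R.p j * 1 := Finset.sum_le_sum fun j _ => mul_le_mul_of_nonneg_left
        (ValN_le_one S f α hα (fun _ => hν) (fun _ => hs) _) (R.p_nonneg j)
    _ = 1 := by rw [← Finset.sum_mul, R.p_sum, one_mul]

end TensorAux

/-- **Tensorization of maximum discounted score** (Lemma: `DS_α^{μⁿ}(fⁿ) = (DS_α^μ(f))ⁿ`). -/
theorem tensorization_of_maximum_discounted_score
    (m : ℕ) (S : ScoreFun) (X : Set (Fin m → Bool)) (f : (Fin m → Bool) → Bool)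
    (μ : InputDist (Fin m) X) (α : ℝ) (hα : 0 ≤ α) (n : ℕ) (hn : 1 ≤ n) :
    DSN S f μ.μ α n = (DS S f μ.μ α) ^ n := by
  have hν := μ.nonneg
  have hs := μ.sum_one
  rw [DS_eq_DSd S f α hα hν hs]
  refine le_antisymm (ciSup_le fun R => ?_) ?_
  · rw [dScoreN_eq_sum]
    have hval : ∀ j, ValN S f α (fun _ : Fin n => μ.μ) (R.T j) ≤ DSd S f α μ.μ ^ n := by
      intro j
      have := ValN_le S f α hα (R.T j) (fun _ : Fin n => μ.μ) (fun _ => hν) (fun _ => hs)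
      rwa [Finset.prod_const, Finset.card_univ, Fintype.card_fin] at this
    calc ∑ j, R.p j * ValN S f α (fun _ : Fin n => μ.μ) (R.T j)
        ≤ ∑ j, R.p j * DSd S f α μ.μ ^ n := Finset.sum_le_sum fun j _ =>
          mul_le_mul_of_nonneg_left (hval j) (R.p_nonneg j)
      _ = DSd S f α μ.μ ^ n := by rw [← Finset.sum_mul, R.p_sum, one_mul]
  · have hhalf : 1 / 2 ≤ DSd S f α μ.μ := half_le_DSd S f α hα hν hs
    have key : ∀ ε : ℝ, 0 < ε → ε < 1 / 2 →
        (DSd S f α μ.μ - ε) ^ n ≤ DSN S f μ.μ α n := by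
      intro ε hε hε2
      obtain ⟨t, ht⟩ := DSd_approx S f α hα hν hs.le hε
      have h1 : (DSd S f α μ.μ - ε) ^ n ≤ (dsDet S f α μ.μ t) ^ n :=
        pow_le_pow_left₀ (by linarith) (by linarith) n
      refine h1.trans ?_
      rw [← ValN_bigT S f α t, ← dScoreN_detAlg S f α (bigT n t)]
      exact le_ciSup (dScoreN_bdd S f α hα hν hs) (detAlg (bigT n t))
    have hcont : Filter.Tendsto (fun ε : ℝ => (DSd S f α μ.μ - ε) ^ n)
        (nhdsWithin 0 (Set.Ioi 0)) (nhds ((DSd S f α μ.μ - 0) ^ n)) :=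
      (((continuous_const.sub continuous_id).pow n).tendsto 0).mono_left
        nhdsWithin_le_nhds
    have hev : ∀ᶠ ε in nhdsWithin (0:ℝ) (Set.Ioi 0),
        (DSd S f α μ.μ - ε) ^ n ≤ DSN S f μ.μ α n := by
      filter_upwards [Ioo_mem_nhdsGT_of_mem
        (⟨le_refl 0, by norm_num⟩ : (0:ℝ) ∈ Set.Ico 0 (1/2))] with ε hε
      exact key ε hε.1 hε.2
    have := le_of_tendsto hcont hev
    simpa using this
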